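/- Fix α > -1 and r > 1. Among all smooth curves s ↦ (ρ(s), θ(s)) in hyperbolic polar coordinates on [a,b] with ρ > 0, ρ'² - ρ²θ'² > 0, ρ(a) = 1, ρ(b) = r, θ(a) = θ(b) = 0, the energy E_α = ∫_a^b ρ^α √(ρ'² - ρ²θ'²) ds satisfies E_α ≤ (r^{α+1} - 1)/(α+1), with equality for the radial segment ρ(s) = s, θ(s) = 0, s ∈ [1,r]. -/

import Mathlib

/-- For α > -1 and r > 1, among spacelike curves in hyperbolic polar coordinates
joining (1,0) and (r,0), the energy ∫ ρ^α √(ρ'² - ρ²θ'²) is at most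
(r^{α+1}-1)/(α+1), with equality for the radial segment. -/
theorem stmt_17 (α r : ℝ) (hα : -1 < α) (hr : 1 < r)
    (a b : ℝ) (hab : a < b) (ρ θ : ℝ → ℝ)
    (hρ : ContDiff ℝ 1 ρ) (hθ : ContDiff ℝ 1 θ)
    (hpos : ∀ s ∈ Set.Icc a b, 0 < ρ s)
    (hsp : ∀ s ∈ Set.Icc a b, (deriv ρ s) ^ 2 - (ρ s) ^ 2 * (deriv θ s) ^ 2 > 0)
    (ha1 : ρ a = 1) (hbr : ρ b = r) (hθa : θ a = 0) (hθb : θ b = 0) :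
    (∫ s in a..b, (ρ s) ^ α * Real.sqrt ((deriv ρ s) ^ 2 - (ρ s) ^ 2 * (deriv θ s) ^ 2))
      ≤ (r ^ (α + 1) - 1) / (α + 1) ∧
    (∫ s in (1 : ℝ)..r, s ^ α) = (r ^ (α + 1) - 1) / (α + 1) := by
  have hα1 : (0:ℝ) < α + 1 := by linarith
  have hcd : Continuous (deriv ρ) := hρ.continuous_deriv le_rfl
  have hcρ : Continuous ρ := hρ.continuous
  have hne : ∀ s ∈ Set.Icc a b, deriv ρ s ≠ 0 := by
    intro s hs h0
    have := hsp s hs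
    have h1 : 0 ≤ (ρ s) ^ 2 * (deriv θ s) ^ 2 := by positivity
    nlinarith
  -- deriv ρ is positive on [a,b]
  have hda : 0 < deriv ρ a := by
    by_contra h
    have hda' : deriv ρ a < 0 :=
      lt_of_le_of_ne (not_lt.mp h) (hne a ⟨le_rfl, hab.le⟩)
    have hneg : ∀ s ∈ Set.Icc a b, deriv ρ s < 0 := by
      intro s hs
      by_contra h'
      have hs' : 0 < deriv ρ s :=
        lt_of_le_of_ne (not_lt.mp h') (Ne.symm (hne s hs))
      have : (0:ℝ) ∈ Set.Icc (deriv ρ a) (deriv ρ s) := ⟨hda'.le, hs'.le⟩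
      obtain ⟨c, hc, hc0⟩ := intermediate_value_Icc hs.1 (hcd.continuousOn) this
      exact hne c ⟨hc.1, le_trans hc.2 hs.2⟩ hc0
    have hanti : StrictAntiOn ρ (Set.Icc a b) := by
      apply strictAntiOn_of_deriv_neg (convex_Icc a b) hcρ.continuousOn
      intro x hx
      rw [interior_Icc] at hx
      exact hneg x ⟨hx.1.le, hx.2.le⟩
    have := hanti ⟨le_rfl, hab.le⟩ ⟨hab.le, le_rfl⟩ hab
    rw [ha1, hbr] at this; linarith
  have hd : ∀ s ∈ Set.Icc a b, 0 < deriv ρ s := by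
    intro s hs
    by_contra h'
    have hs' : deriv ρ s < 0 :=
      lt_of_le_of_ne (not_lt.mp h') (hne s hs)
    have : (0:ℝ) ∈ Set.Icc (deriv ρ s) (deriv ρ a) := ⟨hs'.le, hda.le⟩
    obtain ⟨c, hc, hc0⟩ := intermediate_value_Icc' hs.1 (hcd.continuousOn) this
    exact hne c ⟨hc.1, le_trans hc.2 hs.2⟩ hc0
  -- pointwise bound
  have hpt : ∀ s ∈ Set.Icc a b,
      (ρ s) ^ α * Real.sqrt ((deriv ρ s) ^ 2 - (ρ s) ^ 2 * (deriv θ s) ^ 2)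
        ≤ (ρ s) ^ α * deriv ρ s := by
    intro s hs
    have h1 : Real.sqrt ((deriv ρ s) ^ 2 - (ρ s) ^ 2 * (deriv θ s) ^ 2)
        ≤ deriv ρ s := by
      have h2 : (deriv ρ s) ^ 2 - (ρ s) ^ 2 * (deriv θ s) ^ 2 ≤ (deriv ρ s) ^ 2 := by
        nlinarith [sq_nonneg (ρ s * deriv θ s)]
      calc Real.sqrt ((deriv ρ s) ^ 2 - (ρ s) ^ 2 * (deriv θ s) ^ 2)
          ≤ Real.sqrt ((deriv ρ s) ^ 2) := Real.sqrt_le_sqrt h2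
        _ = deriv ρ s := by
            rw [Real.sqrt_sq (hd s hs).le]
    exact mul_le_mul_of_nonneg_left h1 (Real.rpow_nonneg (hpos s hs).le α)
  -- continuity / integrability
  have hρα : ContinuousOn (fun s => (ρ s) ^ α) (Set.Icc a b) := by
    apply ContinuousOn.rpow_const hcρ.continuousOn
    intro s hs; exact Or.inl (hpos s hs).ne'
  have hint1 : IntervalIntegrable
      (fun s => (ρ s) ^ α * Real.sqrt ((deriv ρ s) ^ 2 - (ρ s) ^ 2 * (deriv θ s) ^ 2))
      MeasureTheory.volume a b := by
    apply ContinuousOn.intervalIntegrable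
    rw [Set.uIcc_of_le hab.le]
    exact hρα.mul (((hcd.continuousOn.pow 2).sub
      ((hcρ.continuousOn.pow 2).mul ((hθ.continuous_deriv le_rfl).continuousOn.pow 2))).sqrt)
  have hint2 : IntervalIntegrable (fun s => (ρ s) ^ α * deriv ρ s)
      MeasureTheory.volume a b := by
    apply ContinuousOn.intervalIntegrable
    rw [Set.uIcc_of_le hab.le]
    exact hρα.mul hcd.continuousOn
  -- FTC
  have hftc : (∫ s in a..b, (ρ s) ^ α * deriv ρ s) = (r ^ (α + 1) - 1) / (α + 1) := by
    have key : ∀ s ∈ Set.uIcc a b,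
        HasDerivAt (fun t => (ρ t) ^ (α + 1) / (α + 1)) ((ρ s) ^ α * deriv ρ s) s := by
      intro s hs
      rw [Set.uIcc_of_le hab.le] at hs
      have hρs : HasDerivAt ρ (deriv ρ s) s :=
        (hρ.differentiable one_ne_zero s).hasDerivAt
      have h := (hρs.rpow_const (p := α + 1) (Or.inl (hpos s hs).ne')).div_const (α + 1)
      refine h.congr_deriv ?_
      rw [show α + 1 - 1 = α from by ring]
      field_simp
    rw [intervalIntegral.integral_eq_sub_of_hasDerivAt key hint2, ha1, hbr,
      Real.one_rpow]
    ring
  constructor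
  · calc (∫ s in a..b, (ρ s) ^ α * Real.sqrt ((deriv ρ s) ^ 2 - (ρ s) ^ 2 * (deriv θ s) ^ 2))
        ≤ ∫ s in a..b, (ρ s) ^ α * deriv ρ s := by
          apply intervalIntegral.integral_mono_on hab.le hint1 hint2 hpt
      _ = (r ^ (α + 1) - 1) / (α + 1) := hftc
  · rw [integral_rpow (Or.inl hα), Real.one_rpow]
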